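/- Fix n ≥ 3 distinct points t_1,...,t_n on P^1 and democratic weights w_i = w with 1/n < w < 1/(n-2). A degree -1 rank-2 quasi-parabolic bundle (E, l) over P^1 is w-stable if and only if: E ≅ O ⊕ O(-1), no parabolic direction l_i lies in the subbundle O, and not all l_i lie in a common subbundle O(-1) ↪ E. -/

import Mathlib

open scoped Classical

section Helpers

lemma sumIf_le {n : ℕ} {w : ℝ} (hw : 0 ≤ w) (P : Fin n → Prop) :
    ∑ i, (if P i then -w else w) ≤ n * w := by
  calc ∑ i, (if P i then -w else w) ≤ ∑ _i : Fin n, w :=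
        Finset.sum_le_sum (fun i _ => by split <;> linarith)
    _ = n * w := by simp [Finset.sum_const, nsmul_eq_mul]

lemma le_sumIf {n : ℕ} {w : ℝ} (hw : 0 ≤ w) (P : Fin n → Prop) :
    -(n * w) ≤ ∑ i, (if P i then -w else w) := by
  calc -((n:ℝ) * w) = ∑ _i : Fin n, -w := by simp [Finset.sum_const, nsmul_eq_mul]
    _ ≤ ∑ i, (if P i then -w else w) :=
        Finset.sum_le_sum (fun i _ => by split <;> linarith)

lemma sumIf_le_mem {n : ℕ} {w : ℝ} (hw : 0 ≤ w) (P : Fin n → Prop) (j : Fin n) (hj : P j) :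
    ∑ i, (if P i then -w else w) ≤ n * w - 2 * w := by
  have hn : 1 ≤ n := (Fin.pos j)
  rw [← Finset.sum_erase_add _ _ (Finset.mem_univ j), if_pos hj]
  have h1 : ∑ i ∈ Finset.univ.erase j, (if P i then -w else w)
      ≤ ∑ _i ∈ Finset.univ.erase j, w :=
    Finset.sum_le_sum (fun i _ => by split <;> linarith)
  have h2 : ∑ _i ∈ Finset.univ.erase j, w = ((n : ℝ) - 1) * w := by
    rw [Finset.sum_const, Finset.card_erase_of_mem (Finset.mem_univ j)]
    rw [Finset.card_univ, Fintype.card_fin, nsmul_eq_mul]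
    push_cast [Nat.cast_sub hn]
    ring
  linarith

lemma le_sumIf_notMem {n : ℕ} {w : ℝ} (hw : 0 ≤ w) (P : Fin n → Prop) (j : Fin n) (hj : ¬ P j) :
    -(n * w) + 2 * w ≤ ∑ i, (if P i then -w else w) := by
  have hn : 1 ≤ n := (Fin.pos j)
  rw [← Finset.sum_erase_add _ _ (Finset.mem_univ j), if_neg hj]
  have h1 : ∑ _i ∈ Finset.univ.erase j, (-w)
      ≤ ∑ i ∈ Finset.univ.erase j, (if P i then -w else w) :=
    Finset.sum_le_sum (fun i _ => by split <;> linarith)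
  have h2 : ∑ _i ∈ Finset.univ.erase j, (-w) = -(((n : ℝ) - 1) * w) := by
    rw [Finset.sum_const, Finset.card_erase_of_mem (Finset.mem_univ j)]
    rw [Finset.card_univ, Fintype.card_fin, nsmul_eq_mul]
    push_cast [Nat.cast_sub hn]
    ring
  linarith

lemma sumIf_all {n : ℕ} {w : ℝ} (P : Fin n → Prop) (hP : ∀ i, P i) :
    ∑ i, (if P i then -w else w) = -(n * w) := by
  rw [Finset.sum_congr rfl (fun i _ => if_pos (hP i))]
  simp [Finset.sum_const, nsmul_eq_mul]

lemma sumIf_none {n : ℕ} {w : ℝ} (P : Fin n → Prop) (hP : ∀ i, ¬ P i) :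
    ∑ i, (if P i then -w else w) = n * w := by
  rw [Finset.sum_congr rfl (fun i _ => if_neg (hP i))]
  simp [Finset.sum_const, nsmul_eq_mul]

end Helpers



/-!
Model of rank-2 bundles on `P¹`: `E = O(d1) ⊕ O(d2)` with `d1 ≤ d2` (every
degree `-1` bundle is of this form), marked points in the affine chart and away
from `0`.  In the case `(d1, d2) = (-1, 0)`, i.e. `E = O ⊕ O(-1)`, the special
subbundle `O ↪ E` is the second factor, with constant fiber `span{![0,1]}`.
-/

/-- `degLE f m`: `f` defines a section of `O(m)` on `P¹`, i.e. `deg f ≤ m`. -/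
def degLE (f : Polynomial ℂ) (m : ℤ) : Prop :=
  ∀ k : ℕ, m < (k : ℤ) → f.coeff k = 0

/-- The fiber at `z` of the line subbundle of `O(d1) ⊕ O(d2)` given by `(f, g)`. -/
noncomputable def fiber (f g : Polynomial ℂ) (z : ℂ) : Submodule ℂ (Fin 2 → ℂ) :=
  Submodule.span ℂ {![f.eval z, g.eval z]}

/-- A line subbundle `O(e) ↪ O(d1) ⊕ O(d2)`. -/
structure LineSub (d1 d2 : ℤ) : Type where
  e : ℤ
  f : Polynomial ℂ
  g : Polynomial ℂ
  hf : degLE f (d1 - e)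
  hg : degLE g (d2 - e)
  nz : ∀ z : ℂ, f.eval z ≠ 0 ∨ g.eval z ≠ 0
  sat : ¬ (degLE f (d1 - e - 1) ∧ degLE g (d2 - e - 1))

open scoped Classical in
/-- The stability index
`Stab(F) = deg E - 2 deg F + Σ_{lᵢ ⊄ F} wᵢ - Σ_{lᵢ ⊂ F} wᵢ`. -/
noncomputable def Stab (d1 d2 : ℤ) {n : ℕ} (t : Fin n → ℂ)
    (l : Fin n → Submodule ℂ (Fin 2 → ℂ)) (w : Fin n → ℝ)
    (F : LineSub d1 d2) : ℝ :=
  ((d1 + d2 : ℤ) : ℝ) - 2 * (F.e : ℝ)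
    + ∑ i, (if l i = fiber F.f F.g (t i) then -(w i) else w i)

section Helpers2

lemma degLE_zero' (m : ℤ) : degLE 0 m := fun k _ => Polynomial.coeff_zero k

lemma eq_zero_of_degLE {f : Polynomial ℂ} {m : ℤ} (h : degLE f m) (hm : m < 0) : f = 0 := by
  ext k
  rw [Polynomial.coeff_zero]
  exact h k (lt_of_lt_of_le hm (Int.natCast_nonneg k))

lemma span01 {c : ℂ} (hc : c ≠ 0) :
    Submodule.span ℂ {![(0:ℂ), c]} = Submodule.span ℂ {![(0:ℂ), 1]} := by
  have h : ![(0:ℂ), c] = c • ![(0:ℂ), 1] := by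
    funext i; fin_cases i <;> simp
  rw [h]
  exact Submodule.span_singleton_smul_eq (isUnit_iff_ne_zero.mpr hc) _

/-- The second factor `O(d2) ↪ O(d1) ⊕ O(d2)`. -/
noncomputable def F0 (d1 d2 : ℤ) : LineSub d1 d2 where
  e := d2
  f := 0
  g := 1
  hf := degLE_zero' _
  hg := fun k hk => by
    rw [Polynomial.coeff_one]
    have : k ≠ 0 := by omega
    simp [this]
  nz := fun z => Or.inr (by simp)
  sat := fun ⟨_, h2⟩ => by
    have := h2 0 (by omega)
    simp at this

lemma fiber_F0 (d1 d2 : ℤ) (z : ℂ) :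
    fiber (F0 d1 d2).f (F0 d1 d2).g z = Submodule.span ℂ {![(0:ℂ), 1]} := by
  simp [fiber, F0]

end Helpers2

/-- for `n ≥ 3` and democratic weights `wᵢ = w`, `1/n < w < 1/(n-2)`,
a degree `-1` rank-2 quasi-parabolic bundle `(E, l)` over `P¹` is `w`-stable iff
`E ≅ O ⊕ O(-1)`, no parabolic `lᵢ` lies in the subbundle `O`, and not all `lᵢ`
lie in a common subbundle `O(-1) ↪ E`. -/
theorem stmt3 (n : ℕ) (hn : 3 ≤ n) (t : Fin n → ℂ) (ht : Function.Injective t)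
    (d1 d2 : ℤ) (h12 : d1 ≤ d2) (hdeg : d1 + d2 = -1)
    (l : Fin n → Submodule ℂ (Fin 2 → ℂ))
    (hl : ∀ i, Module.finrank ℂ (l i) = 1)
    (w : ℝ) (hw1 : 1 / (n : ℝ) < w) (hw2 : w < 1 / ((n : ℝ) - 2)) :
    (∀ F : LineSub d1 d2, 0 < Stab d1 d2 t l (fun _ => w) F)
      ↔ (d1 = -1 ∧ d2 = 0 ∧
          (∀ i, l i ≠ Submodule.span ℂ {![(0 : ℂ), 1]}) ∧
          ¬ ∃ F : LineSub d1 d2, F.e = -1 ∧ ∀ i, l i = fiber F.f F.g (t i)) := by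
  have hn3 : (3:ℝ) ≤ (n:ℝ) := by exact_mod_cast hn
  have hw0 : 0 < w := lt_trans (by positivity) hw1
  have hnw1 : 1 < (n:ℝ) * w := by
    rw [div_lt_iff₀ (by linarith : (0:ℝ) < (n:ℝ))] at hw1; linarith
  have hnw2 : ((n:ℝ) - 2) * w < 1 := by
    rw [lt_div_iff₀ (by linarith : (0:ℝ) < (n:ℝ) - 2)] at hw2; linarith
  have hnw3 : (n:ℝ) * w < 3 := by nlinarith
  have hd2 : 0 ≤ d2 := by omega
  constructor
  · intro hstab
    have h0 := hstab (F0 d1 d2)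
    have h0' : (0:ℝ) < ((d1 + d2 : ℤ):ℝ) - 2*((d2:ℤ):ℝ)
        + ∑ i, (if l i = fiber (F0 d1 d2).f (F0 d1 d2).g (t i) then -w else w) := h0
    rw [hdeg] at h0'
    have hS : (∑ i, if l i = fiber (F0 d1 d2).f (F0 d1 d2).g (t i) then -w else w)
        ≤ (n:ℝ) * w :=
      sumIf_le hw0.le (fun i => l i = fiber (F0 d1 d2).f (F0 d1 d2).g (t i))
    have hd2' : d2 = 0 := by
      by_contra h
      have h1 : (1:ℝ) ≤ ((d2:ℤ):ℝ) := by exact_mod_cast (by omega : (1:ℤ) ≤ d2)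
      push_cast at h0'
      linarith
    have hd1' : d1 = -1 := by omega
    subst hd2'
    refine ⟨hd1', rfl, ?_, ?_⟩
    · intro i hli
      have hj : l i = fiber (F0 d1 0).f (F0 d1 0).g (t i) := by
        rw [fiber_F0]; exact hli
      have hb : (∑ i, if l i = fiber (F0 d1 0).f (F0 d1 0).g (t i) then -w else w)
          ≤ (n:ℝ) * w - 2 * w :=
        sumIf_le_mem hw0.le (fun i => l i = fiber (F0 d1 0).f (F0 d1 0).g (t i)) i hj
      push_cast at h0'
      linarith
    · rintro ⟨F, hFe, hFall⟩
      have h1 := hstab F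
      have h1' : (0:ℝ) < ((d1 + 0 : ℤ):ℝ) - 2*((F.e:ℤ):ℝ)
          + ∑ i, (if l i = fiber F.f F.g (t i) then -w else w) := h1
      rw [hdeg, hFe, (by convert sumIf_all (w := w) (fun i => l i = fiber F.f F.g (t i)) hFall : (∑ i, if l i = fiber F.f F.g (t i) then -w else w) = -((n:ℝ) * w))] at h1'
      push_cast at h1'
      linarith
  · rintro ⟨hd1, hd2', hnot01, hnotall⟩ F
    have key : Stab d1 d2 t l (fun _ => w) F = ((d1 + d2 : ℤ):ℝ) - 2*(F.e:ℝ)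
        + ∑ i, (if l i = fiber F.f F.g (t i) then -w else w) := rfl
    rw [key, hdeg]
    by_cases he1 : 1 ≤ F.e
    · exfalso
      have hf0 : F.f = 0 := eq_zero_of_degLE F.hf (by omega)
      have hg0 : F.g = 0 := eq_zero_of_degLE F.hg (by omega)
      rcases F.nz 0 with h | h
      · rw [hf0] at h; simp at h
      · rw [hg0] at h; simp at h
    by_cases he0 : F.e = 0
    · have hf0 : F.f = 0 := eq_zero_of_degLE F.hf (by omega)
      have hP : ∀ i, ¬ (l i = fiber F.f F.g (t i)) := by
        intro i hi
        have hg : F.g.eval (t i) ≠ 0 := by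
          rcases F.nz (t i) with h | h
          · rw [hf0] at h; simp at h
          · exact h
        apply hnot01 i
        rw [hi, fiber, hf0, Polynomial.eval_zero]
        exact span01 hg
      rw [(by convert sumIf_none (w := w) (fun i => l i = fiber F.f F.g (t i)) hP : (∑ i, if l i = fiber F.f F.g (t i) then -w else w) = (n:ℝ) * w), he0]
      push_cast
      linarith
    by_cases hem1 : F.e = -1
    · have hex : ∃ j, ¬ (l j = fiber F.f F.g (t j)) := by
        by_contra hco
        push_neg at hco
        exact hnotall ⟨F, hem1, hco⟩
      obtain ⟨j, hj⟩ := hex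
      have hb : -((n:ℝ) * w) + 2 * w ≤ ∑ i, if l i = fiber F.f F.g (t i) then -w else w :=
        le_sumIf_notMem hw0.le (fun i => l i = fiber F.f F.g (t i)) j hj
      rw [hem1]
      push_cast
      linarith
    · have he2 : F.e ≤ -2 := by omega
      have he2' : (F.e : ℝ) ≤ -2 := by exact_mod_cast he2
      have hS : -((n:ℝ) * w) ≤ ∑ i, if l i = fiber F.f F.g (t i) then -w else w :=
        le_sumIf hw0.le (fun i => l i = fiber F.f F.g (t i))
      push_cast
      linarith
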